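/- Let H be a finite-dimensional complex Hilbert space, let k be an integer with 4 ≤ 2k ≤ dim H and k = dim H − 3, and let X, Y be k-dimensional subspaces of H whose distance in the ortho-Grassmann graph Γ⊥_k(H) equals 2. Then X and Y are adjacent and non-compatible if and only if there are infinitely many k-dimensional subspaces Z of H ortho-adjacent to both X and Y and such that there is precisely one k-dimensional subspace Z' of H ortho-adjacent to each of X, Y and Z. -/

import Mathlib

noncomputable section

open scoped Classical

variable {H : Type*} [NormedAddCommGroup H] [InnerProductSpace ℂ H] [CompleteSpace H]

/-- The orthogonal projection onto `X`, as an operator `H → H` (junk value `0` if the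
orthogonal projection onto `X` does not exist; it always exists for finite-dimensional,
and more generally complete, subspaces). -/
noncomputable def projOn (X : Submodule ℂ H) : H →L[ℂ] H :=
  if h : X.HasOrthogonalProjection then
    haveI := h
    X.subtypeL.comp X.orthogonalProjectionOnto
  else 0

/-- Two subspaces of `H` are compatible if their orthogonal projections commute. -/
def Compatible (X Y : Submodule ℂ H) : Prop :=
  projOn X * projOn Y = projOn Y * projOn X

/-- `X` is a `k`-dimensional subspace of `H`. -/
def IsDim (k : ℕ) (X : Submodule ℂ H) : Prop :=
  FiniteDimensional ℂ X ∧ Module.finrank ℂ X = k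

/-- Two (distinct) `k`-dimensional subspaces are adjacent if their intersection is
`(k-1)`-dimensional. -/
def AdjacentSub (k : ℕ) (X Y : Submodule ℂ H) : Prop :=
  X ≠ Y ∧ Module.finrank ℂ ↥(X ⊓ Y) = k - 1

/-- Ortho-adjacency: adjacent and compatible. -/
def OrthoAdjacent (k : ℕ) (X Y : Submodule ℂ H) : Prop :=
  AdjacentSub k X Y ∧ Compatible X Y

/-- The ortho-Grassmann graph `Γ⊥_k(H)` on the `k`-dimensional subspaces of `H`:
two `k`-dimensional subspaces are connected by an edge if they are ortho-adjacent. -/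
def orthoGrassmannGraph (H : Type*) [NormedAddCommGroup H] [InnerProductSpace ℂ H]
    [CompleteSpace H] (k : ℕ) : SimpleGraph {X : Submodule ℂ H // IsDim k X} where
  Adj X Y := OrthoAdjacent k X.1 Y.1
  symm := by
    constructor
    rintro X Y ⟨⟨hne, hdim⟩, hc⟩
    refine ⟨⟨hne.symm, by rwa [inf_comm]⟩, ?_⟩
    unfold Compatible at hc ⊢
    exact hc.symm
  loopless := ⟨fun X h => h.1.1 rfl⟩

/-- The Grassmann graph `Γ_k(H)` on the `k`-dimensional subspaces of `H`:
two `k`-dimensional subspaces are connected by an edge if they are adjacent. -/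
def grassmannGraph (H : Type*) [NormedAddCommGroup H] [InnerProductSpace ℂ H]
    [CompleteSpace H] (k : ℕ) : SimpleGraph {X : Submodule ℂ H // IsDim k X} where
  Adj X Y := AdjacentSub k X.1 Y.1
  symm := by
    constructor
    rintro X Y ⟨hne, hdim⟩
    exact ⟨hne.symm, by rwa [inf_comm]⟩
  loopless := ⟨fun X h => h.1 rfl⟩

section AuxiliaryLemmas

open Module Submodule
open scoped ComplexInnerProductSpace

variable [FiniteDimensional ℂ H]

lemma projOn_def (X : Submodule ℂ H) :
    projOn X = X.subtypeL.comp X.orthogonalProjectionOnto :=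
  dif_pos (by haveI : CompleteSpace X := FiniteDimensional.complete ℂ X; infer_instance)

lemma projOn_apply_mem (X : Submodule ℂ H) (v : H) : projOn X v ∈ X := by
  rw [projOn_def]; exact (X.orthogonalProjectionOnto v).2

lemma sub_projOn_mem_orthogonal (X : Submodule ℂ H) (v : H) : v - projOn X v ∈ Xᗮ := by
  rw [projOn_def]; exact Submodule.sub_starProjection_mem_orthogonal v

lemma projOn_eq_self (X : Submodule ℂ H) {v : H} (hv : v ∈ X) : projOn X v = v := by
  rw [projOn_def]; exact Submodule.starProjection_eq_self_iff.2 hv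

lemma projOn_eq_zero (X : Submodule ℂ H) {v : H} (hv : v ∈ Xᗮ) : projOn X v = 0 := by
  rw [projOn_def]
  simp [Submodule.orthogonalProjectionOnto_apply_of_mem_orthogonal hv]

lemma inner_projOn_left_eq_right (X : Submodule ℂ H) (u w : H) :
    ⟪projOn X u, w⟫ = ⟪u, projOn X w⟫ := by
  rw [projOn_def]; exact Submodule.inner_starProjection_left_eq_right X u w

lemma compatible_iff (X Z : Submodule ℂ H) :
    Compatible X Z ↔ Z = (Z ⊓ X) ⊔ (Z ⊓ Xᗮ) := by
  constructor
  · intro h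
    refine le_antisymm (fun z hz => ?_) (sup_le inf_le_left inf_le_left)
    have h1 : projOn X z ∈ Z := by
      have : projOn X (projOn Z z) = projOn Z (projOn X z) := congrFun (congrArg DFunLike.coe h) z
      rw [projOn_eq_self Z hz] at this
      rw [this]; exact projOn_apply_mem Z _
    have h2 : z - projOn X z ∈ Z ⊓ Xᗮ :=
      ⟨Z.sub_mem hz h1, sub_projOn_mem_orthogonal X z⟩
    have hzz : z = projOn X z + (z - projOn X z) := by abel
    rw [hzz]
    exact Submodule.add_mem_sup ⟨h1, projOn_apply_mem X z⟩ h2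
  · intro h
    have hZmapsto : ∀ v ∈ Z, projOn X v ∈ Z := by
      intro v hv
      rw [h] at hv
      obtain ⟨a, ha, b, hb, rfl⟩ := Submodule.mem_sup.1 hv
      rw [map_add, projOn_eq_self X ha.2, projOn_eq_zero X hb.2, add_zero]
      exact ha.1
    have hZperp : ∀ v ∈ Zᗮ, projOn X v ∈ Zᗮ := by
      intro v hv
      rw [Submodule.mem_orthogonal]
      intro z hz
      rw [← inner_projOn_left_eq_right]
      exact hv _ (hZmapsto z hz)
    ext v
    simp only [ContinuousLinearMap.mul_apply]
    have e1 : projOn X v = projOn X (projOn Z v) + projOn X (v - projOn Z v) := by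
      rw [← map_add]; congr 1; abel
    rw [e1, map_add, projOn_eq_self Z (hZmapsto _ (projOn_apply_mem Z v)),
        projOn_eq_zero Z (hZperp _ (sub_projOn_mem_orthogonal Z v)), add_zero]

lemma compatible_comm {X Z : Submodule ℂ H} (h : Compatible X Z) : Compatible Z X := h.symm

/-- key pattern lemma -/
lemma sup_inf_pattern {P M V : Submodule ℂ H} (hP : P ≤ V) (hM : M ≤ Vᗮ) :
    (P ⊔ M) ⊓ V = P := by
  refine le_antisymm (fun w hw => ?_) (le_inf le_sup_left hP)
  obtain ⟨hw1, hw2⟩ := hw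
  obtain ⟨p, hp, m, hm, rfl⟩ := Submodule.mem_sup.1 hw1
  have : m ∈ V ⊓ Vᗮ := ⟨by simpa using V.sub_mem hw2 (hP hp), hM hm⟩
  rw [V.inf_orthogonal_eq_bot] at this
  simp only [Submodule.mem_bot] at this
  simpa [this] using hp

/-- orthogonal decomposition of a submodule along a subsubmodule -/
lemma sup_inf_orthogonal_of_le {L X : Submodule ℂ H} (h : L ≤ X) :
    L ⊔ (X ⊓ Lᗮ) = X := by
  refine le_antisymm (sup_le h inf_le_left) (fun x hx => ?_)
  have h1 : projOn L x ∈ L := projOn_apply_mem L x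
  have h2 : x - projOn L x ∈ X ⊓ Lᗮ := ⟨X.sub_mem hx (h h1), sub_projOn_mem_orthogonal L x⟩
  have hxx : x = projOn L x + (x - projOn L x) := by abel
  rw [hxx]; exact Submodule.add_mem_sup h1 h2

lemma finrank_inf_orthogonal_of_le {L X : Submodule ℂ H} (h : L ≤ X) :
    finrank ℂ ↥(X ⊓ Lᗮ) = finrank ℂ X - finrank ℂ L := by
  have h1 := Submodule.finrank_sup_add_finrank_inf_eq L (X ⊓ Lᗮ)
  rw [sup_inf_orthogonal_of_le h] at h1
  have h2 : L ⊓ (X ⊓ Lᗮ) = ⊥ := by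
    rw [eq_bot_iff]; intro v hv
    have : v ∈ L ⊓ Lᗮ := ⟨hv.1, hv.2.2⟩
    rwa [L.inf_orthogonal_eq_bot] at this
  rw [h2] at h1
  simp only [finrank_bot, add_zero] at h1
  omega

/-- disjointness from orthogonality -/
lemma inf_eq_bot_of_ortho {U V : Submodule ℂ H} (h : V ≤ Uᗮ) : U ⊓ V = ⊥ := by
  rw [eq_bot_iff]; intro v hv
  have : v ∈ U ⊓ Uᗮ := ⟨hv.1, h hv.2⟩
  rwa [U.inf_orthogonal_eq_bot] at this

lemma finrank_sup_of_ortho {U V : Submodule ℂ H} (h : V ≤ Uᗮ) :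
    finrank ℂ ↥(U ⊔ V) = finrank ℂ U + finrank ℂ V := by
  have h1 := Submodule.finrank_sup_add_finrank_inf_eq U V
  rw [inf_eq_bot_of_ortho h] at h1
  simpa using h1

lemma eq_line_of_le_line {P Q : Submodule ℂ H} (h : P ≤ Q) (hP : finrank ℂ P = 1)
    (hQ : finrank ℂ Q = 1) : P = Q :=
  Submodule.eq_of_le_of_finrank_eq h (hP.trans hQ.symm)

lemma finrank_inf_ge (A B Z : Submodule ℂ H) (hA : A ≤ Z) (hB : B ≤ Z) :
    finrank ℂ A + finrank ℂ B ≤ finrank ℂ ↥(A ⊓ B) + finrank ℂ Z := by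
  have h1 := Submodule.finrank_sup_add_finrank_inf_eq A B
  have h2 : finrank ℂ ↥(A ⊔ B) ≤ finrank ℂ Z := Submodule.finrank_mono (sup_le hA hB)
  omega

/-- two distinct lines force rank ≥ 2 -/
lemma two_le_finrank_of_lines {P Q U : Submodule ℂ H} (hP : P ≤ U) (hQ : Q ≤ U)
    (hP1 : finrank ℂ P = 1) (hQ1 : finrank ℂ Q = 1) (hne : P ≠ Q) :
    2 ≤ finrank ℂ U := by
  have hinf : P ⊓ Q = ⊥ := by
    by_contra hb
    have h1 : finrank ℂ ↥(P ⊓ Q) ≠ 0 := by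
      intro h0
      exact hb (Submodule.finrank_eq_zero.1 h0)
    have h2 : finrank ℂ ↥(P ⊓ Q) ≤ 1 := hP1 ▸ Submodule.finrank_mono inf_le_left
    have h3 : P ⊓ Q = P := Submodule.eq_of_le_of_finrank_eq inf_le_left (by omega)
    have h4 : P ⊓ Q = Q := Submodule.eq_of_le_of_finrank_eq inf_le_right (by
      rw [hQ1]; omega)
    exact hne (h3.symm.trans h4)
  have h1 := Submodule.finrank_sup_add_finrank_inf_eq P Q
  rw [hinf] at h1
  simp only [finrank_bot, add_zero] at h1
  have h2 : finrank ℂ ↥(P ⊔ Q) ≤ finrank ℂ U := Submodule.finrank_mono (sup_le hP hQ)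
  omega

lemma le_orthogonal_sup {P L N : Submodule ℂ H} (h1 : P ≤ Lᗮ) (h2 : P ≤ Nᗮ) :
    P ≤ (L ⊔ N)ᗮ := by
  have : (L ⊔ N) ⟂ P := Submodule.isOrtho_sup_left.2 ⟨(Submodule.isOrtho_comm).2 h1,
    (Submodule.isOrtho_comm).2 h2⟩
  exact this.symm

/-- Builder lemma: `L ⊔ M` is ortho-adjacent to `X` when `L ≤ X` is a hyperplane of `X`
and `M` is a line orthogonal to `X`. -/
lemma orthoAdjacent_builder {k : ℕ} {L X M : Submodule ℂ H} (hk : 1 ≤ k)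
    (hLX : L ≤ X) (hM : M ≤ Xᗮ) (hXd : finrank ℂ X = k) (hLd : finrank ℂ L = k - 1)
    (hMd : finrank ℂ M = 1) :
    OrthoAdjacent k (L ⊔ M) X ∧ IsDim k (L ⊔ M) := by
  have hML : M ≤ Lᗮ := hM.trans (Submodule.orthogonal_le hLX)
  have hdim : finrank ℂ ↥(L ⊔ M) = k := by
    rw [finrank_sup_of_ortho hML, hLd, hMd]; omega
  have hinf : (L ⊔ M) ⊓ X = L := sup_inf_pattern hLX hM
  have hne : L ⊔ M ≠ X := by
    intro h
    rw [h, inf_idem] at hinf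
    rw [hinf, hLd] at hXd
    omega
  have hcompat : Compatible (L ⊔ M) X := by
    apply compatible_comm
    rw [compatible_iff]
    refine le_antisymm ?_ (sup_le inf_le_left inf_le_left)
    rw [hinf]
    exact sup_le le_sup_left ((le_inf le_sup_right hM).trans le_sup_right)
  exact ⟨⟨⟨hne, by rw [hinf, hLd]⟩, hcompat⟩, ⟨inferInstance, hdim⟩⟩

/-- From ortho-adjacency: the orthogonal decomposition of `Z` relative to `X`. -/
lemma oadj_decomp {k : ℕ} {Z X : Submodule ℂ H} (h : OrthoAdjacent k Z X) (hk : 1 ≤ k)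
    (hZd : finrank ℂ Z = k) :
    Z = (Z ⊓ X) ⊔ (Z ⊓ Xᗮ) ∧ finrank ℂ ↥(Z ⊓ Xᗮ) = 1 := by
  have hdec : Z = (Z ⊓ X) ⊔ (Z ⊓ Xᗮ) := (compatible_iff X Z).1 (compatible_comm h.2)
  refine ⟨hdec, ?_⟩
  have hinfd : finrank ℂ ↥(Z ⊓ X) = k - 1 := h.1.2
  have hortho : Z ⊓ Xᗮ ≤ (Z ⊓ X)ᗮ := le_trans inf_le_right (Submodule.orthogonal_le inf_le_right)
  have := finrank_sup_of_ortho hortho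
  rw [← hdec, hZd, hinfd] at this
  omega

lemma isOrtho_of_le_orthogonal {a c : Submodule ℂ H} (h : c ≤ aᗮ) : a ≤ cᗮ :=
  (Submodule.IsOrtho.symm (h : c ⟂ a) : a ⟂ c)

/-- Uniqueness of the common ortho-neighbour. -/
lemma uniqueness_claim {k : ℕ} (hk : 2 ≤ k) {X Y N Z' : Submodule ℂ H}
    (hXd : finrank ℂ X = k) (hYd : finrank ℂ Y = k)
    (hL : finrank ℂ ↥(X ⊓ Y) = k - 1)
    (hS2 : finrank ℂ ↥(X ⊔ Y)ᗮ = 2)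
    (hN : N ≤ (X ⊔ Y)ᗮ) (hNd : finrank ℂ N = 1)
    (hZ'd : finrank ℂ Z' = k)
    (hX : OrthoAdjacent k Z' X) (hY : OrthoAdjacent k Z' Y)
    (hZ : OrthoAdjacent k Z' ((X ⊓ Y) ⊔ N)) :
    Z' = (X ⊓ Y) ⊔ ((X ⊔ Y)ᗮ ⊓ Nᗮ) := by
  set L := X ⊓ Y with hLdef
  set S := X ⊔ Y with hSdef
  set Z := L ⊔ N with hZdef
  have hLX : L ≤ X := inf_le_left
  have hLY : L ≤ Y := inf_le_right
  have hNX : N ≤ Xᗮ := hN.trans (Submodule.orthogonal_le le_sup_left)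
  have hNY : N ≤ Yᗮ := hN.trans (Submodule.orthogonal_le le_sup_right)
  have hNL : N ≤ Lᗮ := hNX.trans (Submodule.orthogonal_le hLX)
  have hZX : Z ⊓ X = L := sup_inf_pattern hLX hNX
  have hZY : Z ⊓ Y = L := sup_inf_pattern hLY hNY
  have hZLperp : Z ⊓ Lᗮ = N := by
    rw [hZdef, sup_comm]
    exact sup_inf_pattern hNL L.le_orthogonal_orthogonal
  have hZd : finrank ℂ Z = k := by
    rw [hZdef, finrank_sup_of_ortho hNL, hL, hNd]; omega
  obtain ⟨hdecX, hu1⟩ := oadj_decomp hX (by omega) hZ'd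
  obtain ⟨hdecY, hv1⟩ := oadj_decomp hY (by omega) hZ'd
  obtain ⟨hdecZ, hw1⟩ := oadj_decomp hZ (by omega) hZ'd
  have hA : finrank ℂ ↥(Z' ⊓ X) = k - 1 := hX.1.2
  have hB : finrank ℂ ↥(Z' ⊓ Y) = k - 1 := hY.1.2
  have hC : finrank ℂ ↥(Z' ⊓ Z) = k - 1 := hZ.1.2
  by_cases hcase : L ≤ Z'
  · -- the case L ≤ Z'
    have hGdec : L ⊔ (Z' ⊓ Lᗮ) = Z' := sup_inf_orthogonal_of_le hcase
    set G := Z' ⊓ Lᗮ with hGdef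
    have hGd : finrank ℂ G = 1 := by
      rw [hGdef, finrank_inf_orthogonal_of_le hcase, hZ'd, hL]; omega
    have hAeq : Z' ⊓ X = L :=
      (Submodule.eq_of_le_of_finrank_eq (le_inf hcase hLX) (hL.trans hA.symm)).symm
    have hBeq : Z' ⊓ Y = L :=
      (Submodule.eq_of_le_of_finrank_eq (le_inf hcase hLY) (hL.trans hB.symm)).symm
    have hCeq : Z' ⊓ Z = L :=
      (Submodule.eq_of_le_of_finrank_eq (le_inf hcase (le_sup_left : L ≤ Z))
        (hL.trans hC.symm)).symm
    have hGX : G ≤ Xᗮ := by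
      have h1 : Z' ⊓ Xᗮ ≤ G :=
        le_inf inf_le_left (inf_le_right.trans (Submodule.orthogonal_le hLX))
      rw [← eq_line_of_le_line h1 hu1 hGd]
      exact inf_le_right
    have hGY : G ≤ Yᗮ := by
      have h1 : Z' ⊓ Yᗮ ≤ G :=
        le_inf inf_le_left (inf_le_right.trans (Submodule.orthogonal_le hLY))
      rw [← eq_line_of_le_line h1 hv1 hGd]
      exact inf_le_right
    have hGZ : G ≤ Zᗮ := by
      have h1 : Z' ⊓ Zᗮ ≤ G :=
        le_inf inf_le_left (inf_le_right.trans (Submodule.orthogonal_le (le_sup_left : L ≤ Z)))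
      rw [← eq_line_of_le_line h1 hw1 hGd]
      exact inf_le_right
    have hGS : G ≤ Sᗮ := le_orthogonal_sup hGX hGY
    have hGN : G ≤ Nᗮ := hGZ.trans (Submodule.orthogonal_le (le_sup_right : N ≤ Z))
    have hN'd : finrank ℂ ↥(Sᗮ ⊓ Nᗮ) = 1 := by
      rw [finrank_inf_orthogonal_of_le hN, hS2, hNd]
    have hGN' : G = Sᗮ ⊓ Nᗮ := eq_line_of_le_line (le_inf hGS hGN) hGd hN'd
    rw [← hGdec, hGN']
  · -- the case ¬ L ≤ Z' : derive a contradiction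
    exfalso
    have hABeq : (Z' ⊓ X) ⊓ (Z' ⊓ Y) = Z' ⊓ L := (inf_inf_distrib_left Z' X Y).symm
    have hACeq : (Z' ⊓ X) ⊓ (Z' ⊓ Z) = Z' ⊓ L := by
      rw [← inf_inf_distrib_left]
      congr 1
      rw [← hZX, inf_comm X Z]
    have hBCeq : (Z' ⊓ Y) ⊓ (Z' ⊓ Z) = Z' ⊓ L := by
      rw [← inf_inf_distrib_left]
      congr 1
      rw [← hZY, inf_comm Y Z]
    have hlow : k - 2 ≤ finrank ℂ ↥(Z' ⊓ L) := by
      have := finrank_inf_ge (Z' ⊓ X) (Z' ⊓ Y) Z' inf_le_left inf_le_left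
      rw [hABeq] at this
      rw [hA, hB, hZ'd] at this
      omega
    have hup : finrank ℂ ↥(Z' ⊓ L) = k - 2 := by
      have h1 : finrank ℂ ↥(Z' ⊓ L) ≤ k - 1 := hL ▸ Submodule.finrank_mono inf_le_right
      have h2 : finrank ℂ ↥(Z' ⊓ L) ≠ k - 1 := by
        intro heq
        apply hcase
        have h3 : Z' ⊓ L = L := Submodule.eq_of_le_of_finrank_eq inf_le_right (heq.trans hL.symm)
        rw [← h3]
        exact inf_le_left
      omega
    set L₂ := Z' ⊓ L with hL₂def
    have hL₂Z' : L₂ ≤ Z' := inf_le_left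
    have hL₂L : L₂ ≤ L := inf_le_right
    set W := Z' ⊓ L₂ᗮ with hWdef
    have hWd : finrank ℂ W = 2 := by
      rw [hWdef, finrank_inf_orthogonal_of_le hL₂Z', hZ'd, hup]; omega
    have hL₂A : L₂ ≤ Z' ⊓ X := le_inf inf_le_left (hL₂L.trans hLX)
    have hL₂B : L₂ ≤ Z' ⊓ Y := le_inf inf_le_left (hL₂L.trans hLY)
    have hL₂C : L₂ ≤ Z' ⊓ Z := le_inf inf_le_left (hL₂L.trans (le_sup_left : L ≤ Z))
    set a := (Z' ⊓ X) ⊓ L₂ᗮ with hadef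
    set b := (Z' ⊓ Y) ⊓ L₂ᗮ with hbdef
    set c := (Z' ⊓ Z) ⊓ L₂ᗮ with hcdef
    have had : finrank ℂ a = 1 := by
      rw [hadef, finrank_inf_orthogonal_of_le hL₂A, hA, hup]; omega
    have hbd : finrank ℂ b = 1 := by
      rw [hbdef, finrank_inf_orthogonal_of_le hL₂B, hB, hup]; omega
    have hcd : finrank ℂ c = 1 := by
      rw [hcdef, finrank_inf_orthogonal_of_le hL₂C, hC, hup]; omega
    have haW : a ≤ W := le_inf (inf_le_left.trans inf_le_left) inf_le_right
    have hbW : b ≤ W := le_inf (inf_le_left.trans inf_le_left) inf_le_right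
    have hcW : c ≤ W := le_inf (inf_le_left.trans inf_le_left) inf_le_right
    have hane : a ≠ b := by
      intro hab
      have h1 : Z' ⊓ X = Z' ⊓ Y := by
        rw [← sup_inf_orthogonal_of_le hL₂A, ← sup_inf_orthogonal_of_le hL₂B, ← hadef, ← hbdef,
          hab]
      have h2 : Z' ⊓ X ≤ L₂ := by
        rw [← hABeq]
        exact le_inf le_rfl (le_of_eq h1)
      have := Submodule.finrank_mono h2
      rw [hA, hup] at this
      omega
    have haX : a ≤ X := inf_le_left.trans inf_le_right
    have hbY : b ≤ Y := inf_le_left.trans inf_le_right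
    have hcZ : c ≤ Z := inf_le_left.trans inf_le_right
    -- u and v
    have huW : Z' ⊓ Xᗮ ≤ W :=
      le_inf inf_le_left (inf_le_right.trans (Submodule.orthogonal_le (hL₂L.trans hLX)))
    have hvW : Z' ⊓ Yᗮ ≤ W :=
      le_inf inf_le_left (inf_le_right.trans (Submodule.orthogonal_le (hL₂L.trans hLY)))
    have hWaperp : finrank ℂ ↥(W ⊓ aᗮ) = 1 := by
      rw [finrank_inf_orthogonal_of_le haW, hWd, had]
    have hWbperp : finrank ℂ ↥(W ⊓ bᗮ) = 1 := by
      rw [finrank_inf_orthogonal_of_le hbW, hWd, hbd]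
    have hueq : Z' ⊓ Xᗮ = W ⊓ aᗮ :=
      eq_line_of_le_line (le_inf huW (inf_le_right.trans (Submodule.orthogonal_le haX)))
        hu1 hWaperp
    have hveq : Z' ⊓ Yᗮ = W ⊓ bᗮ :=
      eq_line_of_le_line (le_inf hvW (inf_le_right.trans (Submodule.orthogonal_le hbY)))
        hv1 hWbperp
    have hune : Z' ⊓ Xᗮ ≠ Z' ⊓ Yᗮ := by
      intro huv
      have hau : a ≤ (Z' ⊓ Xᗮ)ᗮ :=
        isOrtho_of_le_orthogonal (inf_le_right.trans (Submodule.orthogonal_le haX))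
      have hbv : b ≤ (Z' ⊓ Yᗮ)ᗮ :=
        isOrtho_of_le_orthogonal (inf_le_right.trans (Submodule.orthogonal_le hbY))
      have hWu : finrank ℂ ↥(W ⊓ (Z' ⊓ Xᗮ)ᗮ) = 1 := by
        rw [finrank_inf_orthogonal_of_le huW, hWd, hu1]
      have hWv : finrank ℂ ↥(W ⊓ (Z' ⊓ Yᗮ)ᗮ) = 1 := by
        rw [finrank_inf_orthogonal_of_le hvW, hWd, hv1]
      have haeq : a = W ⊓ (Z' ⊓ Xᗮ)ᗮ := eq_line_of_le_line (le_inf haW hau) had hWu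
      have hbeq : b = W ⊓ (Z' ⊓ Yᗮ)ᗮ := eq_line_of_le_line (le_inf hbW hbv) hbd hWv
      exact hane (by rw [haeq, hbeq, huv])
    have huL : Z' ⊓ Xᗮ ≤ Lᗮ := inf_le_right.trans (Submodule.orthogonal_le hLX)
    have hvL : Z' ⊓ Yᗮ ≤ Lᗮ := inf_le_right.trans (Submodule.orthogonal_le hLY)
    have h2W : 2 ≤ finrank ℂ ↥(W ⊓ Lᗮ) :=
      two_le_finrank_of_lines (le_inf huW huL) (le_inf hvW hvL) hu1 hv1 hune
    have hWL2 : finrank ℂ ↥(W ⊓ Lᗮ) = 2 :=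
      le_antisymm (hWd ▸ Submodule.finrank_mono inf_le_left) h2W
    have hWL : W ⊓ Lᗮ = W :=
      Submodule.eq_of_le_of_finrank_eq inf_le_left (hWL2.trans hWd.symm)
    have hWLle : W ≤ Lᗮ := by rw [← hWL]; exact inf_le_right
    have hcN : c ≤ N := by
      rw [← hZLperp]
      exact le_inf hcZ (hcW.trans hWLle)
    have hceqN : c = N := eq_line_of_le_line hcN hcd hNd
    have hcSperp : c ≤ Sᗮ := hceqN ▸ hN
    have hac : a ≤ cᗮ :=
      isOrtho_of_le_orthogonal (hcSperp.trans (Submodule.orthogonal_le (haX.trans le_sup_left)))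
    have hbc : b ≤ cᗮ :=
      isOrtho_of_le_orthogonal (hcSperp.trans (Submodule.orthogonal_le (hbY.trans le_sup_right)))
    have hWc1 : finrank ℂ ↥(W ⊓ cᗮ) = 1 := by
      rw [finrank_inf_orthogonal_of_le hcW, hWd, hcd]
    have haw : a = W ⊓ cᗮ := eq_line_of_le_line (le_inf haW hac) had hWc1
    have hbw : b = W ⊓ cᗮ := eq_line_of_le_line (le_inf hbW hbc) hbd hWc1
    exact hane (haw.trans hbw.symm)

/-- Membership of the family in the right-hand set. -/
lemma forward_member {k : ℕ} (hk : 2 ≤ k) {X Y N : Submodule ℂ H}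
    (hXd : finrank ℂ X = k) (hYd : finrank ℂ Y = k)
    (hL : finrank ℂ ↥(X ⊓ Y) = k - 1)
    (hS2 : finrank ℂ ↥(X ⊔ Y)ᗮ = 2)
    (hN : N ≤ (X ⊔ Y)ᗮ) (hNd : finrank ℂ N = 1) :
    IsDim k ((X ⊓ Y) ⊔ N) ∧ OrthoAdjacent k ((X ⊓ Y) ⊔ N) X ∧
      OrthoAdjacent k ((X ⊓ Y) ⊔ N) Y ∧
      ∃! Z' : Submodule ℂ H, IsDim k Z' ∧ OrthoAdjacent k Z' X ∧ OrthoAdjacent k Z' Y ∧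
        OrthoAdjacent k Z' ((X ⊓ Y) ⊔ N) := by
  have hk1 : 1 ≤ k := by omega
  have hLX : X ⊓ Y ≤ X := inf_le_left
  have hLY : X ⊓ Y ≤ Y := inf_le_right
  have hNX : N ≤ Xᗮ := hN.trans (Submodule.orthogonal_le le_sup_left)
  have hNY : N ≤ Yᗮ := hN.trans (Submodule.orthogonal_le le_sup_right)
  obtain ⟨hoX, hdim⟩ := orthoAdjacent_builder hk1 hLX hNX hXd hL hNd
  obtain ⟨hoY, -⟩ := orthoAdjacent_builder hk1 hLY hNY hYd hL hNd
  refine ⟨hdim, hoX, hoY, ?_⟩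
  set N' := (X ⊔ Y)ᗮ ⊓ Nᗮ with hN'def
  have hN'd : finrank ℂ N' = 1 := by
    rw [hN'def, finrank_inf_orthogonal_of_le hN, hS2, hNd]
  have hN'S : N' ≤ (X ⊔ Y)ᗮ := inf_le_left
  have hN'X : N' ≤ Xᗮ := hN'S.trans (Submodule.orthogonal_le le_sup_left)
  have hN'Y : N' ≤ Yᗮ := hN'S.trans (Submodule.orthogonal_le le_sup_right)
  have hN'Z : N' ≤ ((X ⊓ Y) ⊔ N)ᗮ :=
    le_orthogonal_sup (hN'S.trans (Submodule.orthogonal_le (hLX.trans le_sup_left)))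
      inf_le_right
  obtain ⟨hoX', -⟩ := orthoAdjacent_builder hk1 hLX hN'X hXd hL hN'd
  obtain ⟨hoY', -⟩ := orthoAdjacent_builder hk1 hLY hN'Y hYd hL hN'd
  have hZd : finrank ℂ ↥((X ⊓ Y) ⊔ N) = k := hdim.2
  obtain ⟨hoZ', hdim'⟩ := orthoAdjacent_builder hk1 (le_sup_left : X ⊓ Y ≤ (X ⊓ Y) ⊔ N)
    hN'Z hZd hL hN'd
  refine ⟨(X ⊓ Y) ⊔ N', ⟨hdim', hoX', hoY', hoZ'⟩, ?_⟩
  rintro W ⟨hWdim, hWX, hWY, hWZ⟩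
  exact uniqueness_claim hk hXd hYd hL hS2 hN hNd hWdim.2 hWX hWY hWZ

/-- The forward direction: the set is infinite. -/
lemma forward_infinite {k : ℕ} (hk : 2 ≤ k) {X Y : Submodule ℂ H}
    (hXd : finrank ℂ X = k) (hYd : finrank ℂ Y = k)
    (hL : finrank ℂ ↥(X ⊓ Y) = k - 1)
    (hS2 : finrank ℂ ↥(X ⊔ Y)ᗮ = 2) :
    {Z : Submodule ℂ H | IsDim k Z ∧ OrthoAdjacent k Z X ∧ OrthoAdjacent k Z Y ∧
      (∃! Z' : Submodule ℂ H, IsDim k Z' ∧ OrthoAdjacent k Z' X ∧ OrthoAdjacent k Z' Y ∧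
        OrthoAdjacent k Z' Z)}.Infinite := by
  set S := X ⊔ Y with hSdef
  let b : Basis (Fin 2) ℂ ↥Sᗮ := Module.finBasisOfFinrankEq ℂ ↥Sᗮ hS2
  have li : LinearIndependent ℂ (fun i => ((b i : ↥Sᗮ) : H)) :=
    b.linearIndependent.map' Sᗮ.subtype (Submodule.ker_subtype _)
  set f : ℂ → H := fun t => ((b 0 : ↥Sᗮ) : H) + t • ((b 1 : ↥Sᗮ) : H) with hfdef
  have hfmem : ∀ t, f t ∈ Sᗮ := fun t => Sᗮ.add_mem (b 0).2 (Sᗮ.smul_mem t (b 1).2)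
  have hfne : ∀ t, f t ≠ 0 := by
    intro t h0
    have := Fintype.linearIndependent_iff.1 li ![1, t] (by
      rw [Fin.sum_univ_two]
      simpa [hfdef] using h0) 0
    simp at this
  have hNle : ∀ t, (ℂ ∙ (f t)) ≤ Sᗮ := fun t => (Submodule.span_singleton_le_iff_mem _ _).2 (hfmem t)
  have hNd : ∀ t, finrank ℂ ↥(ℂ ∙ (f t)) = 1 := fun t => finrank_span_singleton (hfne t)
  have hrec : ∀ t, ((ℂ ∙ (f t)) ⊔ (X ⊓ Y)) ⊓ Sᗮ = ℂ ∙ (f t) := by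
    intro t
    exact sup_inf_pattern (hNle t)
      (((inf_le_left.trans le_sup_left : X ⊓ Y ≤ S)).trans S.le_orthogonal_orthogonal)
  apply Set.infinite_of_injective_forall_mem
    (f := fun t : ℂ => (X ⊓ Y) ⊔ (ℂ ∙ (f t)))
  · intro t s hts
    simp only at hts
    have h1 : (ℂ ∙ (f t)) = (ℂ ∙ (f s)) := by
      rw [← hrec t, ← hrec s, sup_comm (ℂ ∙ (f t)), sup_comm (ℂ ∙ (f s)), hts]
    have h2 : f t ∈ ℂ ∙ (f s) := h1 ▸ Submodule.mem_span_singleton_self _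
    obtain ⟨c, hc⟩ := Submodule.mem_span_singleton.1 h2
    have h3 : (c - 1) • ((b 0 : ↥Sᗮ) : H) + (c * s - t) • ((b 1 : ↥Sᗮ) : H) = 0 := by
      have hcc := hc
      simp only [hfdef, smul_add, smul_smul] at hcc
      rw [show (c - 1) • ((b 0 : ↥Sᗮ) : H) + (c * s - t) • ((b 1 : ↥Sᗮ) : H)
          = (c • ((b 0 : ↥Sᗮ) : H) + (c * s) • ((b 1 : ↥Sᗮ) : H))
            - (((b 0 : ↥Sᗮ) : H) + t • ((b 1 : ↥Sᗮ) : H)) from by module, hcc, sub_self]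
    have h4 := Fintype.linearIndependent_iff.1 li ![c - 1, c * s - t] (by
      rw [Fin.sum_univ_two]; simpa using h3)
    have hc1 : c - 1 = 0 := by simpa using h4 0
    have hcst : c * s - t = 0 := by simpa using h4 1
    have hc1' : c = 1 := by linear_combination hc1
    rw [hc1'] at hcst
    linear_combination -hcst
  · intro t
    exact forward_member hk hXd hYd hL hS2 (hNle t) (hNd t)

lemma lines_inf_eq_bot {P Q : Submodule ℂ H} (hP : finrank ℂ P = 1) (hQ : finrank ℂ Q = 1)
    (hne : P ≠ Q) : P ⊓ Q = ⊥ := by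
  by_contra hb
  have h1 : finrank ℂ ↥(P ⊓ Q) ≠ 0 := fun h0 => hb (Submodule.finrank_eq_zero.1 h0)
  have h2 : finrank ℂ ↥(P ⊓ Q) ≤ 1 := hP ▸ Submodule.finrank_mono inf_le_left
  have h3 : P ⊓ Q = P := Submodule.eq_of_le_of_finrank_eq inf_le_left (by omega)
  have h4 : P ⊓ Q = Q := Submodule.eq_of_le_of_finrank_eq inf_le_right (by rw [hQ]; omega)
  exact hne (h3.symm.trans h4)

lemma inf_of_disjoint_hats {L₀ B₁ B₂ : Submodule ℂ H} (h1 : B₁ ≤ L₀ᗮ) (h2 : B₂ ≤ L₀ᗮ)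
    (hd : B₁ ⊓ B₂ = ⊥) : (L₀ ⊔ B₁) ⊓ (L₀ ⊔ B₂) = L₀ := by
  refine le_antisymm (fun w hw => ?_) (le_inf le_sup_left le_sup_left)
  obtain ⟨l, hl, b, hb, hw1⟩ := Submodule.mem_sup.1 hw.1
  obtain ⟨l', hl', b', hb', hw2⟩ := Submodule.mem_sup.1 hw.2
  have hbb : b - b' ∈ L₀ ⊓ L₀ᗮ := by
    constructor
    · have : b - b' = l' - l := by
        have := hw1.trans hw2.symm
        -- l + b = l' + b'
        linear_combination (norm := abel) this
      rw [this]; exact L₀.sub_mem hl' hl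
    · exact L₀ᗮ.sub_mem (h1 hb) (h2 hb')
  rw [L₀.inf_orthogonal_eq_bot] at hbb
  simp only [Submodule.mem_bot, sub_eq_zero] at hbb
  have hbB : b ∈ B₁ ⊓ B₂ := ⟨hb, hbb ▸ hb'⟩
  rw [hd] at hbB
  simp only [Submodule.mem_bot] at hbB
  rw [← hw1, hbB, add_zero]
  exact hl

/-- `X ⊓ Y` is contained in any `Z` ortho-adjacent to both when `dim (X ⊓ Y) = k - 2`. -/
lemma l0_le_of_oadj {k : ℕ} (hk : 2 ≤ k) {X Y Z : Submodule ℂ H}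
    (hZd : finrank ℂ Z = k) (hL0 : finrank ℂ ↥(X ⊓ Y) = k - 2)
    (hZX : OrthoAdjacent k Z X) (hZY : OrthoAdjacent k Z Y) : X ⊓ Y ≤ Z := by
  have h1 : (Z ⊓ X) ⊓ (Z ⊓ Y) = Z ⊓ (X ⊓ Y) := (inf_inf_distrib_left Z X Y).symm
  have h2 := finrank_inf_ge (Z ⊓ X) (Z ⊓ Y) Z inf_le_left inf_le_left
  rw [h1, hZX.1.2, hZY.1.2, hZd] at h2
  have h3 : finrank ℂ ↥(Z ⊓ (X ⊓ Y)) ≤ k - 2 := hL0 ▸ Submodule.finrank_mono inf_le_right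
  have h4 : Z ⊓ (X ⊓ Y) = X ⊓ Y :=
    Submodule.eq_of_le_of_finrank_eq inf_le_right (by omega)
  rw [← h4]
  exact inf_le_left

/-- auxiliary step: an element of `Zc` orthogonal to `L₀` and to `Ah` is orthogonal to `X`,
where `Zc ⊓ X = L₀ ⊔ Ah` and `Zc` is compatible with `X`. -/
lemma proj_zero_aux {X L₀ Ah Zc : Submodule ℂ H}
    (hdec : Zc = (Zc ⊓ X) ⊔ (Zc ⊓ Xᗮ)) (hAc : Zc ⊓ X = L₀ ⊔ Ah)
    {y : H} (hy1 : y ∈ Zc) (hyL₀ : y ∈ L₀ᗮ) (hyAh : ∀ a ∈ Ah, ⟪y, a⟫ = 0) : y ∈ Xᗮ := by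
  rw [hdec] at hy1
  obtain ⟨p, hp, w, hw, hy⟩ := Submodule.mem_sup.1 hy1
  have hpX : p ∈ X := hp.2
  have hproj : projOn X y = p := by
    rw [← hy, map_add, projOn_eq_self X hpX, projOn_eq_zero X hw.2, add_zero]
  have hpmem : p ∈ L₀ ⊔ Ah := hAc ▸ hp
  obtain ⟨l, hl, a, ha, hpla⟩ := Submodule.mem_sup.1 hpmem
  have hyp : ⟪y - p, p⟫ = 0 := by
    have h1 : y - p ∈ Xᗮ := by rw [← hproj]; exact sub_projOn_mem_orthogonal X y
    have := (Submodule.mem_orthogonal X (y - p)).1 h1 p hpX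
    rwa [inner_eq_zero_symm] at this
  have hyl : ⟪y, (l : H)⟫ = 0 := (Submodule.mem_orthogonal' L₀ y).1 hyL₀ l hl
  have hya : ⟪y, (a : H)⟫ = 0 := hyAh a ha
  have hpp : ⟪(p : H), p⟫ = 0 := by
    have h1 : ⟪(p : H), p⟫ = ⟪y, p⟫ - ⟪y - p, p⟫ := by
      rw [inner_sub_left]; ring
    rw [h1, hyp, ← hpla, inner_add_right, hyl, hya]
    ring
  have hp0 : p = 0 := inner_self_eq_zero.1 hpp
  have : y = y - p := by rw [hp0, sub_zero]
  rw [this, ← hproj]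
  exact sub_projOn_mem_orthogonal X y

/-- Core of the converse: if `dim (X ⊓ Y) = k - 2` and `Z`, `Z'` are both ortho-adjacent to
`X` and `Y`, `Z'` moreover ortho-adjacent to `Z`, and `Z, Z'` cut the same line through `X`,
then there is a second common ortho-neighbour distinct from `Z'`. -/
lemma converse_core {k : ℕ} (hk : 2 ≤ k) {X Y Z Z' : Submodule ℂ H}
    (hXd : finrank ℂ X = k) (hYd : finrank ℂ Y = k)
    (hZd : finrank ℂ Z = k) (hZ'd : finrank ℂ Z' = k)
    (hL0 : finrank ℂ ↥(X ⊓ Y) = k - 2)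
    (hZX : OrthoAdjacent k Z X) (hZY : OrthoAdjacent k Z Y)
    (hZ'X : OrthoAdjacent k Z' X) (hZ'Y : OrthoAdjacent k Z' Y)
    (hZ'Z : OrthoAdjacent k Z' Z)
    (key : (Z ⊓ X) ⊓ (X ⊓ Y)ᗮ = (Z' ⊓ X) ⊓ (X ⊓ Y)ᗮ) :
    ∃ Z'' : Submodule ℂ H, (IsDim k Z'' ∧ OrthoAdjacent k Z'' X ∧ OrthoAdjacent k Z'' Y ∧
      OrthoAdjacent k Z'' Z) ∧ Z'' ≠ Z' := by
  have hk1 : 1 ≤ k := by omega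
  set L₀ := X ⊓ Y with hL₀def
  have hL₀X : L₀ ≤ X := inf_le_left
  have hL₀Y : L₀ ≤ Y := inf_le_right
  have hL₀Z : L₀ ≤ Z := l0_le_of_oadj hk hZd hL0 hZX hZY
  have hL₀Z' : L₀ ≤ Z' := l0_le_of_oadj hk hZ'd hL0 hZ'X hZ'Y
  -- the hat lines
  set Ah := (Z ⊓ X) ⊓ L₀ᗮ with hAhdef
  set Bh := (Z ⊓ Y) ⊓ L₀ᗮ with hBhdef
  set Bh' := (Z' ⊓ Y) ⊓ L₀ᗮ with hBh'def
  have hL₀A : L₀ ≤ Z ⊓ X := le_inf hL₀Z hL₀X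
  have hL₀B : L₀ ≤ Z ⊓ Y := le_inf hL₀Z hL₀Y
  have hL₀A' : L₀ ≤ Z' ⊓ X := le_inf hL₀Z' hL₀X
  have hL₀B' : L₀ ≤ Z' ⊓ Y := le_inf hL₀Z' hL₀Y
  have hAdec : L₀ ⊔ Ah = Z ⊓ X := sup_inf_orthogonal_of_le hL₀A
  have hBdec : L₀ ⊔ Bh = Z ⊓ Y := sup_inf_orthogonal_of_le hL₀B
  have hA'dec : L₀ ⊔ Ah = Z' ⊓ X := by
    rw [key]
    exact sup_inf_orthogonal_of_le hL₀A'
  have hB'dec : L₀ ⊔ Bh' = Z' ⊓ Y := sup_inf_orthogonal_of_le hL₀B'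
  have hAhd : finrank ℂ Ah = 1 := by
    rw [hAhdef, finrank_inf_orthogonal_of_le hL₀A, hZX.1.2, hL0]; omega
  have hBhd : finrank ℂ Bh = 1 := by
    rw [hBhdef, finrank_inf_orthogonal_of_le hL₀B, hZY.1.2, hL0]; omega
  have hBh'd : finrank ℂ Bh' = 1 := by
    rw [hBh'def, finrank_inf_orthogonal_of_le hL₀B', hZ'Y.1.2, hL0]; omega
  have hAhL₀ : Ah ≤ L₀ᗮ := inf_le_right
  have hBhL₀ : Bh ≤ L₀ᗮ := inf_le_right
  have hBh'L₀ : Bh' ≤ L₀ᗮ := inf_le_right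
  have hAhX : Ah ≤ X := inf_le_left.trans inf_le_right
  have hBhY : Bh ≤ Y := inf_le_left.trans inf_le_right
  have hBh'Y : Bh' ≤ Y := inf_le_left.trans inf_le_right
  have hAhZ : Ah ≤ Z := inf_le_left.trans inf_le_left
  have hBhZ : Bh ≤ Z := inf_le_left.trans inf_le_left
  -- Z and Z' as sups
  have hZsup : Z = (Z ⊓ X) ⊔ (Z ⊓ Y) := by
    have h1 : (Z ⊓ X) ⊓ (Z ⊓ Y) = L₀ := by
      rw [← inf_inf_distrib_left, ← hL₀def]
      exact inf_eq_right.2 hL₀Z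
    have h2 := Submodule.finrank_sup_add_finrank_inf_eq (Z ⊓ X) (Z ⊓ Y)
    rw [h1, hZX.1.2, hZY.1.2, hL0] at h2
    exact (Submodule.eq_of_le_of_finrank_eq (sup_le inf_le_left inf_le_left)
      (by rw [hZd]; omega)).symm
  have hZ'sup : Z' = (Z' ⊓ X) ⊔ (Z' ⊓ Y) := by
    have h1 : (Z' ⊓ X) ⊓ (Z' ⊓ Y) = L₀ := by
      rw [← inf_inf_distrib_left, ← hL₀def]
      exact inf_eq_right.2 hL₀Z'
    have h2 := Submodule.finrank_sup_add_finrank_inf_eq (Z' ⊓ X) (Z' ⊓ Y)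
    rw [h1, hZ'X.1.2, hZ'Y.1.2, hL0] at h2
    exact (Submodule.eq_of_le_of_finrank_eq (sup_le inf_le_left inf_le_left)
      (by rw [hZ'd]; omega)).symm
  have hBne : Bh ≠ Bh' := by
    intro hBB
    apply hZ'Z.1.1
    rw [hZ'sup, hZsup, ← hAdec, ← hBdec, ← hA'dec, ← hB'dec, hBB]
  have hBinf : (Z ⊓ Y) ⊓ (Z' ⊓ Y) = L₀ := by
    rw [← hBdec, ← hB'dec]
    exact inf_of_disjoint_hats hBhL₀ hBh'L₀ (lines_inf_eq_bot hBhd hBh'd hBne)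
  -- Step 1 : Ah ⟂ Y
  obtain ⟨hdecZY, -⟩ := oadj_decomp hZY hk1 hZd
  obtain ⟨hdecZ'Y, -⟩ := oadj_decomp hZ'Y hk1 hZ'd
  obtain ⟨hdecZX, -⟩ := oadj_decomp hZX hk1 hZd
  obtain ⟨hdecZ'X, -⟩ := oadj_decomp hZ'X hk1 hZ'd
  have hAhY : Ah ≤ Yᗮ := by
    intro x hx
    have hxZ : x ∈ Z := hAhZ hx
    have hxZ' : x ∈ Z' := by
      have h0 : x ∈ L₀ ⊔ Ah := Submodule.mem_sup_right hx
      have h2 : x ∈ Z' ⊓ X := hA'dec ▸ h0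
      exact (Submodule.mem_inf.1 h2).1
    -- compute the projection of x on Y from both sides
    have hq1 : projOn Y x ∈ Z ⊓ Y := by
      rw [hdecZY] at hxZ
      obtain ⟨p, hp, w, hw, hxpw⟩ := Submodule.mem_sup.1 hxZ
      rw [← hxpw, map_add, projOn_eq_self Y hp.2, projOn_eq_zero Y hw.2, add_zero]
      exact hp
    have hq2 : projOn Y x ∈ Z' ⊓ Y := by
      rw [hdecZ'Y] at hxZ'
      obtain ⟨p, hp, w, hw, hxpw⟩ := Submodule.mem_sup.1 hxZ'
      rw [← hxpw, map_add, projOn_eq_self Y hp.2, projOn_eq_zero Y hw.2, add_zero]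
      exact hp
    have hqL₀ : projOn Y x ∈ L₀ := hBinf ▸ (⟨hq1, hq2⟩ : projOn Y x ∈ (Z ⊓ Y) ⊓ (Z' ⊓ Y))
    have hxL₀ : x ∈ L₀ᗮ := hAhL₀ hx
    have hq0 : projOn Y x = 0 := by
      have h1 : ⟪projOn Y x, projOn Y x⟫ = ⟪x, projOn Y x⟫ - ⟪x - projOn Y x, projOn Y x⟫ := by
        rw [inner_sub_left]; ring
      have h2 : ⟪x, projOn Y x⟫ = 0 := (Submodule.mem_orthogonal' L₀ x).1 hxL₀ _ hqL₀
      have h3 : ⟪x - projOn Y x, projOn Y x⟫ = 0 := by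
        have := (Submodule.mem_orthogonal Y (x - projOn Y x)).1
          (sub_projOn_mem_orthogonal Y x) _ (hL₀Y hqL₀)
        rwa [inner_eq_zero_symm] at this
      have hqq : ⟪projOn Y x, projOn Y x⟫ = 0 := by rw [h1, h2, h3, sub_zero]
      exact inner_self_eq_zero.1 hqq
    have : x = x - projOn Y x := by rw [hq0, sub_zero]
    rw [this]
    exact sub_projOn_mem_orthogonal Y x
  -- Step 2 : Bh ⟂ X and Bh' ⟂ X
  have hBhX : Bh ≤ Xᗮ := by
    intro y hy
    refine proj_zero_aux hdecZX hAdec.symm (hBhZ hy) (hBhL₀ hy) ?_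
    intro a ha
    exact Submodule.inner_right_of_mem_orthogonal (hBhY hy) (hAhY ha)
  have hBh'X : Bh' ≤ Xᗮ := by
    intro y hy
    have hB'Z'le : Bh' ≤ Z' := inf_le_left.trans inf_le_left
    have hyZ' : y ∈ Z' := hB'Z'le hy
    refine proj_zero_aux hdecZ'X hA'dec.symm hyZ' (hBh'L₀ hy) ?_
    intro a ha
    exact Submodule.inner_right_of_mem_orthogonal (hBh'Y hy) (hAhY ha)
  -- Step 3 : Yhat ⟂ X
  set Yh := Y ⊓ L₀ᗮ with hYhdef
  have hYhd : finrank ℂ Yh = 2 := by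
    rw [hYhdef, finrank_inf_orthogonal_of_le hL₀Y, hYd, hL0]; omega
  have hYhX : Yh ≤ Xᗮ := by
    have h1 : Bh ≤ Yh ⊓ Xᗮ := le_inf (le_inf hBhY hBhL₀) hBhX
    have h2 : Bh' ≤ Yh ⊓ Xᗮ := le_inf (le_inf hBh'Y hBh'L₀) hBh'X
    have h3 : 2 ≤ finrank ℂ ↥(Yh ⊓ Xᗮ) := two_le_finrank_of_lines h1 h2 hBhd hBh'd hBne
    have h4 : Yh ⊓ Xᗮ = Yh := Submodule.eq_of_le_of_finrank_eq inf_le_left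
      (le_antisymm (Submodule.finrank_mono inf_le_left) (hYhd ▸ h3))
    rw [← h4]
    exact inf_le_right
  -- Step 4 : the second line in Xhat
  set Xh := X ⊓ L₀ᗮ with hXhdef
  have hAhXh : Ah ≤ Xh := le_inf hAhX hAhL₀
  have hXhd : finrank ℂ Xh = 2 := by
    rw [hXhdef, finrank_inf_orthogonal_of_le hL₀X, hXd, hL0]; omega
  set Ah2 := Xh ⊓ Ahᗮ with hAh2def
  have hAh2d : finrank ℂ Ah2 = 1 := by
    rw [hAh2def, finrank_inf_orthogonal_of_le hAhXh, hXhd, hAhd]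
  have hAh2X : Ah2 ≤ X := inf_le_left.trans inf_le_left
  have hAh2L₀ : Ah2 ≤ L₀ᗮ := inf_le_left.trans inf_le_right
  have hAh2Ah : Ah2 ≤ Ahᗮ := inf_le_right
  have hAh2Y : Ah2 ≤ Yᗮ := by
    have hYdec : L₀ ⊔ Yh = Y := sup_inf_orthogonal_of_le hL₀Y
    rw [← hYdec]
    exact le_orthogonal_sup hAh2L₀ (isOrtho_of_le_orthogonal (hYhX.trans
      (Submodule.orthogonal_le hAh2X)))
  have hAh2Bh : Ah2 ≤ Bhᗮ :=
    isOrtho_of_le_orthogonal (hBhX.trans (Submodule.orthogonal_le hAh2X))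
  have hAh2Z : Ah2 ≤ Zᗮ := by
    rw [hZsup, ← hAdec, ← hBdec]
    exact le_orthogonal_sup (le_orthogonal_sup hAh2L₀ hAh2Ah)
      (le_orthogonal_sup hAh2L₀ hAh2Bh)
  -- the new neighbour
  set Z'' := (L₀ ⊔ Bh) ⊔ Ah2 with hZ''def
  have hLBd : finrank ℂ ↥(L₀ ⊔ Bh) = k - 1 := by
    rw [finrank_sup_of_ortho hBhL₀, hL0, hBhd]; omega
  have hLAh2d : finrank ℂ ↥(L₀ ⊔ Ah2) = k - 1 := by
    rw [finrank_sup_of_ortho hAh2L₀, hL0, hAh2d]; omega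
  have hLBY : L₀ ⊔ Bh ≤ Y := sup_le hL₀Y hBhY
  have hLBZ : L₀ ⊔ Bh ≤ Z := sup_le hL₀Z hBhZ
  have hLAh2X : L₀ ⊔ Ah2 ≤ X := sup_le hL₀X hAh2X
  obtain ⟨hoY'', hdim''⟩ := orthoAdjacent_builder hk1 hLBY hAh2Y hYd hLBd hAh2d
  obtain ⟨hoZ'', -⟩ := orthoAdjacent_builder hk1 hLBZ hAh2Z hZd hLBd hAh2d
  have hswap : Z'' = (L₀ ⊔ Ah2) ⊔ Bh := by
    rw [hZ''def, sup_assoc, sup_assoc, sup_comm Bh Ah2]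
  obtain ⟨hoX'', -⟩ := orthoAdjacent_builder hk1 hLAh2X hBhX hXd hLAh2d hBhd
  rw [← hswap] at hoX''
  refine ⟨Z'', ⟨hdim'', hoX'', hoY'', hoZ''⟩, ?_⟩
  -- Z'' ≠ Z'
  intro hZZ'
  have h1 : Z'' ⊓ X = L₀ ⊔ Ah2 := by
    rw [hswap]
    exact sup_inf_pattern hLAh2X hBhX
  have h2 : Z'' ⊓ X = L₀ ⊔ Ah := by rw [hZZ', ← hA'dec]
  have h3 : Ah = Ah2 := by
    have e1 : (L₀ ⊔ Ah) ⊓ L₀ᗮ = Ah := by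
      rw [sup_comm]
      exact sup_inf_pattern hAhL₀ L₀.le_orthogonal_orthogonal
    have e2 : (L₀ ⊔ Ah2) ⊓ L₀ᗮ = Ah2 := by
      rw [sup_comm]
      exact sup_inf_pattern hAh2L₀ L₀.le_orthogonal_orthogonal
    rw [← e1, ← e2, ← h1, ← h2]
  have h4 : Ah ≤ Ahᗮ := h3 ▸ hAh2Ah
  have h5 : Ah = ⊥ := by
    have : Ah ≤ Ah ⊓ Ahᗮ := le_inf le_rfl h4
    rwa [Ah.inf_orthogonal_eq_bot, le_bot_iff] at this
  rw [h5] at hAhd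
  simp at hAhd

/-- Converse: a second common ortho-neighbour always exists in the non-adjacent case. -/
lemma converse_exists {k : ℕ} (hk : 2 ≤ k) {X Y Z Z' : Submodule ℂ H}
    (hXd : finrank ℂ X = k) (hYd : finrank ℂ Y = k)
    (hZd : finrank ℂ Z = k) (hZ'd : finrank ℂ Z' = k)
    (hL0 : finrank ℂ ↥(X ⊓ Y) = k - 2)
    (hZX : OrthoAdjacent k Z X) (hZY : OrthoAdjacent k Z Y)
    (hZ'X : OrthoAdjacent k Z' X) (hZ'Y : OrthoAdjacent k Z' Y)
    (hZ'Z : OrthoAdjacent k Z' Z) :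
    ∃ Z'' : Submodule ℂ H, (IsDim k Z'' ∧ OrthoAdjacent k Z'' X ∧ OrthoAdjacent k Z'' Y ∧
      OrthoAdjacent k Z'' Z) ∧ Z'' ≠ Z' := by
  set L₀ := X ⊓ Y with hL₀def
  have hL₀X : L₀ ≤ X := inf_le_left
  have hL₀Y : L₀ ≤ Y := inf_le_right
  have hL₀Z : L₀ ≤ Z := l0_le_of_oadj hk hZd hL0 hZX hZY
  have hL₀Z' : L₀ ≤ Z' := l0_le_of_oadj hk hZ'd hL0 hZ'X hZ'Y
  set Ah := (Z ⊓ X) ⊓ L₀ᗮ with hAhdef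
  set Bh := (Z ⊓ Y) ⊓ L₀ᗮ with hBhdef
  set Ah' := (Z' ⊓ X) ⊓ L₀ᗮ with hAh'def
  set Bh' := (Z' ⊓ Y) ⊓ L₀ᗮ with hBh'def
  have hL₀A : L₀ ≤ Z ⊓ X := le_inf hL₀Z hL₀X
  have hL₀B : L₀ ≤ Z ⊓ Y := le_inf hL₀Z hL₀Y
  have hL₀A' : L₀ ≤ Z' ⊓ X := le_inf hL₀Z' hL₀X
  have hL₀B' : L₀ ≤ Z' ⊓ Y := le_inf hL₀Z' hL₀Y
  have hAhd : finrank ℂ Ah = 1 := by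
    rw [hAhdef, finrank_inf_orthogonal_of_le hL₀A, hZX.1.2, hL0]; omega
  have hBhd : finrank ℂ Bh = 1 := by
    rw [hBhdef, finrank_inf_orthogonal_of_le hL₀B, hZY.1.2, hL0]; omega
  have hAh'd : finrank ℂ Ah' = 1 := by
    rw [hAh'def, finrank_inf_orthogonal_of_le hL₀A', hZ'X.1.2, hL0]; omega
  have hBh'd : finrank ℂ Bh' = 1 := by
    rw [hBh'def, finrank_inf_orthogonal_of_le hL₀B', hZ'Y.1.2, hL0]; omega
  -- the hat of Z and Z'
  have hhatZ : Z ⊓ L₀ᗮ = Ah ⊔ Bh := by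
    have h1 : Z = L₀ ⊔ (Ah ⊔ Bh) := by
      have e1 : Z = (L₀ ⊔ Ah) ⊔ (L₀ ⊔ Bh) := by
        rw [sup_inf_orthogonal_of_le hL₀A, sup_inf_orthogonal_of_le hL₀B]
        have h2 : (Z ⊓ X) ⊓ (Z ⊓ Y) = L₀ := by
          rw [← inf_inf_distrib_left, ← hL₀def]
          exact inf_eq_right.2 hL₀Z
        have h3 := Submodule.finrank_sup_add_finrank_inf_eq (Z ⊓ X) (Z ⊓ Y)
        rw [h2, hZX.1.2, hZY.1.2, hL0] at h3
        exact (Submodule.eq_of_le_of_finrank_eq (sup_le inf_le_left inf_le_left)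
          (by rw [hZd]; omega)).symm
      rw [e1, sup_sup_sup_comm, sup_idem]
    rw [h1, sup_comm]
    exact sup_inf_pattern (sup_le inf_le_right inf_le_right) L₀.le_orthogonal_orthogonal
  have hhatZ' : Z' ⊓ L₀ᗮ = Ah' ⊔ Bh' := by
    have h1 : Z' = L₀ ⊔ (Ah' ⊔ Bh') := by
      have e1 : Z' = (L₀ ⊔ Ah') ⊔ (L₀ ⊔ Bh') := by
        rw [sup_inf_orthogonal_of_le hL₀A', sup_inf_orthogonal_of_le hL₀B']
        have h2 : (Z' ⊓ X) ⊓ (Z' ⊓ Y) = L₀ := by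
          rw [← inf_inf_distrib_left, ← hL₀def]
          exact inf_eq_right.2 hL₀Z'
        have h3 := Submodule.finrank_sup_add_finrank_inf_eq (Z' ⊓ X) (Z' ⊓ Y)
        rw [h2, hZ'X.1.2, hZ'Y.1.2, hL0] at h3
        exact (Submodule.eq_of_le_of_finrank_eq (sup_le inf_le_left inf_le_left)
          (by rw [hZ'd]; omega)).symm
      rw [e1, sup_sup_sup_comm, sup_idem]
    rw [h1, sup_comm]
    exact sup_inf_pattern (sup_le inf_le_right inf_le_right) L₀.le_orthogonal_orthogonal
  -- a nonzero common element of the hats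
  have hL₀C : L₀ ≤ Z' ⊓ Z := le_inf hL₀Z' hL₀Z
  have hChd : finrank ℂ ↥((Z' ⊓ Z) ⊓ L₀ᗮ) = 1 := by
    rw [finrank_inf_orthogonal_of_le hL₀C, hZ'Z.1.2, hL0]; omega
  have hChne : (Z' ⊓ Z) ⊓ L₀ᗮ ≠ ⊥ := by
    intro h
    rw [h] at hChd
    simp at hChd
  obtain ⟨v, hvC, hv0⟩ := Submodule.exists_mem_ne_zero_of_ne_bot hChne
  have hvZ : v ∈ Ah ⊔ Bh := by
    rw [← hhatZ]
    exact ⟨(Submodule.mem_inf.1 hvC.1).2, hvC.2⟩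
  have hvZ' : v ∈ Ah' ⊔ Bh' := by
    rw [← hhatZ']
    exact ⟨(Submodule.mem_inf.1 hvC.1).1, hvC.2⟩
  obtain ⟨a, ha, b, hb, hvab⟩ := Submodule.mem_sup.1 hvZ
  obtain ⟨a', ha', b', hb', hvab'⟩ := Submodule.mem_sup.1 hvZ'
  have hAhX : Ah ≤ X := inf_le_left.trans inf_le_right
  have hAh'X : Ah' ≤ X := inf_le_left.trans inf_le_right
  have hBhY : Bh ≤ Y := inf_le_left.trans inf_le_right
  have hBh'Y : Bh' ≤ Y := inf_le_left.trans inf_le_right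
  have haa : a = a' ∧ b = b' := by
    have hw : a - a' ∈ L₀ ⊓ L₀ᗮ := by
      constructor
      · rw [hL₀def]
        constructor
        · exact X.sub_mem (hAhX ha) (hAh'X ha')
        · have e : a - a' = b' - b := by
            have := hvab.trans hvab'.symm
            linear_combination (norm := abel) this
          rw [e]
          exact Y.sub_mem (hBh'Y hb') (hBhY hb)
      · exact L₀ᗮ.sub_mem ((inf_le_right : Ah ≤ L₀ᗮ) ha) ((inf_le_right : Ah' ≤ L₀ᗮ) ha')
    rw [L₀.inf_orthogonal_eq_bot] at hw
    simp only [Submodule.mem_bot, sub_eq_zero] at hw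
    refine ⟨hw, ?_⟩
    have := hvab.trans hvab'.symm
    rw [hw] at this
    have h2 : b - b' = 0 := by linear_combination (norm := abel) this
    linear_combination (norm := abel) h2
  have hab0 : a ≠ 0 ∨ b ≠ 0 := by
    by_contra hcon
    push_neg at hcon
    rw [hcon.1, hcon.2, add_zero] at hvab
    exact hv0 hvab.symm
  rcases hab0 with ha0 | hb0
  · -- a ≠ 0 : the X-lines agree
    have key : Ah = Ah' := by
      have e1 : Ah = ℂ ∙ a :=
        (eq_line_of_le_line ((Submodule.span_singleton_le_iff_mem a Ah).2 ha)
          (finrank_span_singleton ha0) hAhd).symm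
      have e2 : Ah' = ℂ ∙ a :=
        (eq_line_of_le_line ((Submodule.span_singleton_le_iff_mem a Ah').2 (haa.1 ▸ ha'))
          (finrank_span_singleton ha0) hAh'd).symm
      rw [e1, e2]
    exact converse_core hk hXd hYd hZd hZ'd hL0 hZX hZY hZ'X hZ'Y hZ'Z key
  · -- b ≠ 0 : the Y-lines agree; apply the core with X and Y swapped
    have hL0' : finrank ℂ ↥(Y ⊓ X) = k - 2 := by rw [inf_comm Y X, ← hL₀def]; exact hL0
    have key : (Z ⊓ Y) ⊓ (Y ⊓ X)ᗮ = (Z' ⊓ Y) ⊓ (Y ⊓ X)ᗮ := by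
      rw [inf_comm Y X, ← hL₀def]
      have e1 : Bh = ℂ ∙ b :=
        (eq_line_of_le_line ((Submodule.span_singleton_le_iff_mem b Bh).2 hb)
          (finrank_span_singleton hb0) hBhd).symm
      have e2 : Bh' = ℂ ∙ b :=
        (eq_line_of_le_line ((Submodule.span_singleton_le_iff_mem b Bh').2 (haa.2 ▸ hb'))
          (finrank_span_singleton hb0) hBh'd).symm
      rw [← hBhdef, ← hBh'def, e1, e2]
    obtain ⟨Z'', ⟨hd'', hY'', hX'', hZ''⟩, hne''⟩ :=
      converse_core hk hYd hXd hZd hZ'd hL0' hZY hZX hZ'Y hZ'X hZ'Z key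
    exact ⟨Z'', ⟨hd'', hX'', hY'', hZ''⟩, hne''⟩


end AuxiliaryLemmas

/-- Suppose `H` is finite-dimensional, `4 ≤ 2k ≤ dim H`, `k = dim H - 3`, and let `X, Y` be
`k`-dimensional subspaces of `H` at distance `2` in `Γ⊥_k(H)`. Then `X, Y` are adjacent and
non-compatible if and only if there are infinitely many `k`-dimensional subspaces `Z`
ortho-adjacent to both `X, Y` and such that there is precisely one `k`-dimensional subspace
`Z'` ortho-adjacent to each of `X, Y, Z`. -/
theorem adjacent_noncompatible_iff_infinite_unique
    [FiniteDimensional ℂ H] (k : ℕ) (hk : 2 ≤ k) (h2k : 2 * k ≤ Module.finrank ℂ H)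
    (hk3 : k = Module.finrank ℂ H - 3)
    (X Y : Submodule ℂ H) (hX : IsDim k X) (hY : IsDim k Y)
    (hdist : (orthoGrassmannGraph H k).dist ⟨X, hX⟩ ⟨Y, hY⟩ = 2) :
    (AdjacentSub k X Y ∧ ¬ Compatible X Y) ↔
      {Z : Submodule ℂ H | IsDim k Z ∧ OrthoAdjacent k Z X ∧ OrthoAdjacent k Z Y ∧
        (∃! Z' : Submodule ℂ H, IsDim k Z' ∧ OrthoAdjacent k Z' X ∧ OrthoAdjacent k Z' Y ∧
          OrthoAdjacent k Z' Z)}.Infinite := by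
  have hn : Module.finrank ℂ H = k + 3 := by omega
  constructor
  · rintro ⟨hadj, -⟩
    have hsupd : Module.finrank ℂ ↥(X ⊔ Y) = k + 1 := by
      have h1 := Submodule.finrank_sup_add_finrank_inf_eq X Y
      rw [hadj.2, hX.2, hY.2] at h1
      omega
    have hS2 : Module.finrank ℂ ↥(X ⊔ Y)ᗮ = 2 := by
      have h1 := Submodule.finrank_add_finrank_orthogonal (X ⊔ Y)
      rw [hsupd, hn] at h1
      omega
    exact forward_infinite hk hX.2 hY.2 hadj.2 hS2
  · intro hinf
    have hne : X ≠ Y := by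
      intro hXY
      have : (⟨X, hX⟩ : {X : Submodule ℂ H // IsDim k X}) = ⟨Y, hY⟩ := Subtype.ext hXY
      rw [this, SimpleGraph.dist_self] at hdist
      omega
    have hnoadj : ¬ (orthoGrassmannGraph H k).Adj ⟨X, hX⟩ ⟨Y, hY⟩ := by
      intro hadj
      have h1 := SimpleGraph.dist_le (SimpleGraph.Walk.cons hadj SimpleGraph.Walk.nil)
      simp only [SimpleGraph.Walk.length_cons, SimpleGraph.Walk.length_nil] at h1
      omega
    obtain ⟨Z, hZmem⟩ := hinf.nonempty
    obtain ⟨hZdim, hZX, hZY, hEx⟩ := hZmem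
    by_contra hcon
    have hnadj : ¬ AdjacentSub k X Y := by
      intro hadj
      by_cases hc : Compatible X Y
      · exact hnoadj (show OrthoAdjacent k X Y from ⟨hadj, hc⟩)
      · exact hcon ⟨hadj, hc⟩
    have hXYfr : Module.finrank ℂ ↥(X ⊓ Y) ≠ k - 1 := fun h => hnadj ⟨hne, h⟩
    have hL0 : Module.finrank ℂ ↥(X ⊓ Y) = k - 2 := by
      have hup : Module.finrank ℂ ↥(X ⊓ Y) ≤ k := hX.2 ▸ Submodule.finrank_mono inf_le_left
      have hneqk : Module.finrank ℂ ↥(X ⊓ Y) ≠ k := by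
        intro hfr
        have h1 : X ⊓ Y = X :=
          Submodule.eq_of_le_of_finrank_eq inf_le_left (by rw [hfr, hX.2])
        have h2 : X ⊓ Y = Y :=
          Submodule.eq_of_le_of_finrank_eq inf_le_right (by rw [hfr, hY.2])
        exact hne (h1.symm.trans h2)
      have hlow : k - 2 ≤ Module.finrank ℂ ↥(X ⊓ Y) := by
        have h1 : (Z ⊓ X) ⊓ (Z ⊓ Y) = Z ⊓ (X ⊓ Y) := (inf_inf_distrib_left Z X Y).symm
        have h2 := finrank_inf_ge (Z ⊓ X) (Z ⊓ Y) Z inf_le_left inf_le_left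
        rw [h1, hZX.1.2, hZY.1.2, hZdim.2] at h2
        have h3 : Module.finrank ℂ ↥(Z ⊓ (X ⊓ Y)) ≤ Module.finrank ℂ ↥(X ⊓ Y) :=
          Submodule.finrank_mono inf_le_right
        omega
      omega
    obtain ⟨Z', hZ'props, huniq⟩ := hEx
    obtain ⟨Z'', hprops'', hne''⟩ := converse_exists hk hX.2 hY.2 hZdim.2 hZ'props.1.2 hL0
      hZX hZY hZ'props.2.1 hZ'props.2.2.1 hZ'props.2.2.2
    exact hne'' (huniq Z'' ⟨hprops''.1, hprops''.2.1, hprops''.2.2.1, hprops''.2.2.2⟩)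

end
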